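/- Let α : R → A be a ring homomorphism satisfying PC_l(α), and let M be a Noetherian left A-module. Then M is Noetherian as an R-module if and only if M is S_l-torsion (every element of M is annihilated by some element of S_l). -/

import Mathlib

/-- A left ideal `L` of `A` is `R`-cofinite (via `α : R →+* A`) if `A ⧸ L` is a
Noetherian left `R`-module via restriction of scalars along `α`. -/
def RCofiniteIdeal {R A : Type*} [Ring R] [Ring A] (α : R →+* A)
    (L : Submodule A A) : Prop :=
  @IsNoetherian R (A ⧸ L) _ _ (Module.compHom _ α)

/-- `s ∈ A` is left `R`-cofinite if `A ⧸ As` is a Noetherian left `R`-module via `α`. -/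
def LeftCofinite {R A : Type*} [Ring R] [Ring A] (α : R →+* A) (s : A) : Prop :=
  RCofiniteIdeal α (Submodule.span A {s})

/-- `PC_l(α)`: every `R`-cofinite left ideal of `A` contains a left `R`-cofinite element. -/
def PCl {R A : Type*} [Ring R] [Ring A] (α : R →+* A) : Prop :=
  ∀ L : Submodule A A, RCofiniteIdeal α L → ∃ s ∈ L, LeftCofinite α s

/-- An `A`-linear map is `R`-linear for the scalar action restricted along `α`. -/
def toCompHom {R A M N : Type*} [Ring R] [Ring A] [AddCommGroup M] [AddCommGroup N]
    [Module A M] [Module A N] (α : R →+* A) (f : M →ₗ[A] N) :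
    @LinearMap R R _ _ (RingHom.id R) M N _ _ (Module.compHom M α) (Module.compHom N α) :=
  letI := Module.compHom M α
  letI := Module.compHom N α
  { toFun := f, map_add' := f.map_add, map_smul' := fun r x => f.map_smul (α r) x }

/-- Noetherianness along `α` transfers through surjective `A`-linear maps. -/
theorem compHom_noetherian_of_surjective {R A M N : Type*} [Ring R] [Ring A]
    [AddCommGroup M] [AddCommGroup N] [Module A M] [Module A N] (α : R →+* A)
    (f : M →ₗ[A] N) (hf : Function.Surjective f)
    (h : @IsNoetherian R M _ _ (Module.compHom M α)) :
    @IsNoetherian R N _ _ (Module.compHom N α) := by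
  letI := Module.compHom M α
  letI := Module.compHom N α
  exact isNoetherian_of_surjective (toCompHom α f) (LinearMap.range_eq_top.mpr hf)

/-- Assume `PC_l(α)` and let `M` be a Noetherian left `A`-module. Then `M` is
Noetherian as an `R`-module (via `α`) iff `M` is `S_l`-torsion. -/
theorem noetherian_iff_torsion_of_pcl {R A M : Type*} [Ring R] [Ring A]
    [AddCommGroup M] [Module A M] (α : R →+* A) (hPC : PCl α)
    (hM : IsNoetherian A M) :
    (@IsNoetherian R M _ _ (Module.compHom M α)) ↔
      ∀ m : M, ∃ s : A, LeftCofinite α s ∧ s • m = 0 := by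
  letI : Module R M := Module.compHom M α
  constructor
  · intro hN m
    set f : A →ₗ[A] M := LinearMap.toSpanSingleton A M m with hf
    set L : Submodule A A := LinearMap.ker f with hL
    let g : (A ⧸ L) →ₗ[A] M := L.liftQ f le_rfl
    have hg : Function.Injective g := by
      rw [← LinearMap.ker_eq_bot]
      exact Submodule.ker_liftQ_eq_bot _ _ _ le_rfl
    have hcof : RCofiniteIdeal α L := by
      unfold RCofiniteIdeal
      letI : Module R (A ⧸ L) := Module.compHom _ α
      exact isNoetherian_of_injective (toCompHom α g) hg
    obtain ⟨s, hsL, hs⟩ := hPC L hcof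
    exact ⟨s, hs, hsL⟩
  · intro h
    obtain ⟨n, m, hm⟩ :=
      Submodule.fg_iff_exists_fin_generating_family.mp (IsNoetherian.noetherian (⊤ : Submodule A M))
    choose s hs hsm using fun i => h (m i)
    have hker : ∀ i, Submodule.span A {s i} ≤
        LinearMap.ker (LinearMap.toSpanSingleton A M (m i)) := by
      intro i
      rw [Submodule.span_le, Set.singleton_subset_iff]
      exact hsm i
    let φi : ∀ i : Fin n, (A ⧸ Submodule.span A {s i}) →ₗ[A] M := fun i =>
      Submodule.liftQ _ (LinearMap.toSpanSingleton A M (m i)) (hker i)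
    let φ : (∀ i : Fin n, A ⧸ Submodule.span A {s i}) →ₗ[A] M :=
      ∑ i : Fin n, (φi i) ∘ₗ LinearMap.proj i
    have hφi : ∀ i, m i = φ (Pi.single i (Submodule.Quotient.mk 1)) := by
      intro i
      simp only [φ, LinearMap.sum_apply, LinearMap.comp_apply, LinearMap.proj_apply]
      rw [Finset.sum_eq_single i]
      · simp [φi]
      · intro j _ hj
        rw [Pi.single_eq_of_ne hj, map_zero]
      · intro hi; exact absurd (Finset.mem_univ i) hi
    have hφsurj : LinearMap.range φ = ⊤ := by
      rw [← top_le_iff, ← hm, Submodule.span_le]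
      rintro x ⟨i, rfl⟩
      exact ⟨Pi.single i (Submodule.Quotient.mk 1), (hφi i).symm⟩
    letI Qmod : ∀ i : Fin n, Module R (A ⧸ Submodule.span A {s i}) :=
      fun i => Module.compHom _ α
    haveI hQN : ∀ i, IsNoetherian R (A ⧸ Submodule.span A {s i}) := fun i => hs i
    haveI hPiN : IsNoetherian R (∀ i : Fin n, A ⧸ Submodule.span A {s i}) := isNoetherian_pi
    exact compHom_noetherian_of_surjective α φ (LinearMap.range_eq_top.mp hφsurj) hPiN
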